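/- For every k ∈ ℕ there is a set A of n = 2·2^k + 1 points in ℝ^{2^k} with the ℓ₁ norm (namely 0, the standard basis vectors, and the rows of the 2^k × 2^k Walsh matrix) such that for every d-dimensional real normed space Y, every D ≥ 1, and every linear map T : ℝ^{2^k} → Y satisfying ‖u − v‖₁ ≤ ‖T(u) − T(v)‖_Y ≤ D·‖u − v‖₁ for all u, v ∈ A, one has D ≥ √((n−1)/(2d)). -/

import Mathlib

open scoped ENNReal

/-- The `2^k × 2^k` Walsh matrix, with rows and columns indexed by `Fin k → Bool`
(i.e. `𝔽₂^k`): its `(u, v)` entry is `(-1)^⟨u,v⟩` where `⟨u,v⟩ = #{i : uᵢ = vᵢ = 1}`.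
This is the `k`-fold Kronecker power of `[[1,1],[1,-1]]`. -/
noncomputable def walshRow (k : ℕ) (u : Fin k → Bool) : (Fin k → Bool) → ℝ :=
  fun v => (-1 : ℝ) ^ (Finset.univ.filter fun i => u i && v i).card

/-- The point set `A = {0} ∪ {wᵢ} ∪ {eᵢ} ⊆ ℝ^{2^k}` consisting of the origin, the rows of
the Walsh matrix, and the standard basis vectors, viewed inside `ℓ₁^{2^k}`. -/
noncomputable def walshPointSetL1 (k : ℕ) :
    Set (PiLp 1 fun _ : Fin k → Bool => ℝ) :=
  {0} ∪ Set.range (fun u => (WithLp.equiv 1 _).symm (walshRow k u)) ∪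
    Set.range (fun u : Fin k → Bool => (WithLp.equiv 1 _).symm (Pi.single u 1))

lemma walshRow_eq_prod (k : ℕ) (u v : Fin k → Bool) :
    walshRow k u v = ∏ i, (if u i && v i then (-1:ℝ) else 1) := by
  rw [walshRow, Finset.prod_ite, Finset.prod_const, Finset.prod_const, one_pow, mul_one]

lemma walsh_orth (k : ℕ) (u u' : Fin k → Bool) :
    ∑ v : Fin k → Bool, walshRow k u v * walshRow k u' v
      = if u = u' then (2:ℝ)^k else 0 := by
  have h : ∀ v, walshRow k u v * walshRow k u' v
      = ∏ i, ((if u i && v i then (-1:ℝ) else 1) * (if u' i && v i then (-1:ℝ) else 1)) := by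
    intro v; rw [walshRow_eq_prod, walshRow_eq_prod, Finset.prod_mul_distrib]
  simp_rw [h]
  rw [← Fintype.prod_sum
    (fun i (b : Bool) => (if u i && b then (-1:ℝ) else 1) * (if u' i && b then (-1:ℝ) else 1))]
  have h2 : ∀ i, (∑ b : Bool,
      (if u i && b then (-1:ℝ) else 1) * (if u' i && b then (-1:ℝ) else 1))
      = if u i = u' i then (2:ℝ) else 0 := by
    intro i; cases hu : u i <;> cases hu' : u' i <;> simp [hu, hu'] <;> norm_num
  simp_rw [h2]
  by_cases h : u = u'
  · simp [h]
  · obtain ⟨i, hi⟩ := Function.ne_iff.mp h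
    rw [Finset.prod_eq_zero (Finset.mem_univ i) (by simp [hi]), if_neg h]

lemma norm_l1 {ι : Type*} [Fintype ι] (x : ι → ℝ) :
    ‖(WithLp.equiv 1 (∀ _ : ι, ℝ)).symm x‖ = ∑ v, |x v| := by
  rw [PiLp.norm_eq_sum (by norm_num : 0 < (1:ℝ≥0∞).toReal)]
  simp [Real.norm_eq_abs]


set_option maxHeartbeats 1000000 in
/-- For every `k` consider the `n = 2·2^k + 1` point subset
`A = {0} ∪ {walsh rows} ∪ {standard basis}` of `ℓ₁^{2^k}`.  For every `d`-dimensional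
normed space `Y`, any linear map `T : ℓ₁^{2^k} → Y` which is non-contracting and
`D`-Lipschitz on `A` satisfies `D ≥ √((n-1)/(2d)) = √(2^k/d)`. -/
theorem stmt_7 (k d : ℕ) (Y : Type) [NormedAddCommGroup Y] [NormedSpace ℝ Y]
    [FiniteDimensional ℝ Y] (hY : Module.finrank ℝ Y = d)
    (D : ℝ) (hD : 1 ≤ D)
    (T : PiLp 1 (fun _ : Fin k → Bool => ℝ) →ₗ[ℝ] Y)
    (hT : ∀ u ∈ walshPointSetL1 k, ∀ v ∈ walshPointSetL1 k,
      ‖u - v‖ ≤ ‖T u - T v‖ ∧ ‖T u - T v‖ ≤ D * ‖u - v‖) :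
    Real.sqrt ((2 : ℝ) ^ k / d) ≤ D := by
  classical
  set m : ℝ := (2:ℝ)^k with hm_def
  have hm : (0:ℝ) < m := by positivity
  let e : (Fin k → Bool) → PiLp 1 (fun _ : Fin k → Bool => ℝ) :=
    fun v => (WithLp.equiv 1 _).symm (Pi.single v 1)
  let w : (Fin k → Bool) → PiLp 1 (fun _ : Fin k → Bool => ℝ) :=
    fun u => (WithLp.equiv 1 _).symm (walshRow k u)
  have h0 : (0 : PiLp 1 (fun _ : Fin k → Bool => ℝ)) ∈ walshPointSetL1 k :=
    Or.inl (Or.inl rfl)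
  have hwmem : ∀ u, w u ∈ walshPointSetL1 k := fun u => Or.inl (Or.inr ⟨u, rfl⟩)
  have hemem : ∀ v, e v ∈ walshPointSetL1 k := fun v => Or.inr ⟨v, rfl⟩
  have hnorme : ∀ v, ‖e v‖ = 1 := by
    intro v
    rw [show e v = (WithLp.equiv 1 (∀ _ : Fin k → Bool, ℝ)).symm (Pi.single v 1) from rfl,
      norm_l1]
    simp [Pi.single_apply, apply_ite abs, Finset.sum_ite_eq]
  have hnormw : ∀ u, ‖w u‖ = m := by
    intro u
    rw [show w u = (WithLp.equiv 1 (∀ _ : Fin k → Bool, ℝ)).symm (walshRow k u) from rfl,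
      norm_l1]
    have : ∀ v, |walshRow k u v| = 1 := by
      intro v; rw [walshRow, abs_pow, abs_neg, abs_one, one_pow]
    simp only [this, Finset.sum_const, Finset.card_univ, nsmul_eq_mul, mul_one]
    simp [hm_def]
  have hTe : ∀ v, ‖T (e v)‖ ≤ D := by
    intro v
    have h := (hT (e v) (hemem v) 0 h0).2
    rw [sub_zero, map_zero, sub_zero, hnorme, mul_one] at h
    exact h
  have hTw : ∀ u, m ≤ ‖T (w u)‖ := by
    intro u
    have h := (hT (w u) (hwmem u) 0 h0).1
    rw [sub_zero, map_zero, sub_zero, hnormw] at h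
    exact h
  have hTwne : ∀ u, T (w u) ≠ 0 := by
    intro u h
    have := hTw u; rw [h, norm_zero] at this; linarith
  choose f hf1 hf2 using fun u => exists_dual_vector ℝ (T (w u)) (norm_ne_zero_iff.mpr (hTwne u))
  set B : (Fin k → Bool) → (Fin k → Bool) → ℝ := fun u v => f u (T (e v)) with hB_def
  have hB : ∀ u v, |B u v| ≤ D := by
    intro u v
    calc |B u v| = ‖(f u) (T (e v))‖ := (Real.norm_eq_abs _).symm
    _ ≤ ‖f u‖ * ‖T (e v)‖ := (f u).le_opNorm _
    _ ≤ D := by rw [hf1 u, one_mul]; exact hTe v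
  have hrow : ∀ u, walshRow k u = ∑ v, walshRow k u v • (Pi.single v 1 : (Fin k → Bool) → ℝ) := by
    intro u; funext x
    simp [Finset.sum_apply, Pi.single_apply, Finset.sum_ite_eq]
  have hdecomp : ∀ u, T (w u) = ∑ v, walshRow k u v • T (e v) := by
    intro u
    have : w u = ∑ v, walshRow k u v • e v := by
      show (WithLp.linearEquiv 1 ℝ (∀ _ : Fin k → Bool, ℝ)).symm (walshRow k u)
          = ∑ v, walshRow k u v • (WithLp.linearEquiv 1 ℝ (∀ _ : Fin k → Bool, ℝ)).symm (Pi.single v 1)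
      rw [hrow u, map_sum]
      simp [Pi.single_apply, Finset.sum_ite_eq]
    rw [this, map_sum]
    simp
  have hsum : ∀ u, (∑ v, walshRow k u v * B u v) = ‖T (w u)‖ := by
    intro u
    have h2 : (f u) (T (w u)) = ‖T (w u)‖ := by simpa using hf2 u
    rw [← h2, hdecomp u, map_sum]
    simp [hB_def, smul_eq_mul]
  -- Euclidean factorization
  let ι := Fin k → Bool
  let Φ : Y →ₗ[ℝ] EuclideanSpace ℝ ι :=
    (WithLp.linearEquiv 2 ℝ (∀ _ : ι, ℝ)).symm.toLinearMap ∘ₗ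
      LinearMap.pi (fun u => (f u).toLinearMap)
  set W := LinearMap.range Φ with hW_def
  have hdW : Module.finrank ℝ W ≤ d := hY ▸ LinearMap.finrank_range_le Φ
  let b := stdOrthonormalBasis ℝ W
  let φ : Fin (Module.finrank ℝ W) → EuclideanSpace ℝ ι := fun j => ((b j : W) : EuclideanSpace ℝ ι)
  have hφ : ∀ j j', ∑ u, φ j u * φ j' u = if j = j' then (1:ℝ) else 0 := by
    intro j j'
    have h1 := b.orthonormal
    rw [orthonormal_iff_ite] at h1
    have h2 := h1 j j'
    rw [Submodule.coe_inner] at h2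
    rw [PiLp.inner_apply] at h2
    simp at h2; rw [← h2]; exact Finset.sum_congr rfl fun x _ => mul_comm _ _
  have hmemc : ∀ v, Φ (T (e v)) ∈ W := fun v => ⟨T (e v), rfl⟩
  let cw : ι → W := fun v => ⟨Φ (T (e v)), hmemc v⟩
  let r : Fin (Module.finrank ℝ W) → ι → ℝ := fun j v => b.repr (cw v) j
  have hexp : ∀ u v, B u v = ∑ j, (r j v) * φ j u := by
    intro u v
    have h := b.sum_repr (cw v)
    have h' : (∑ j, r j v • φ j) = Φ (T (e v)) := by
      have h2 := congrArg (Subtype.val) h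
      rw [Submodule.coe_sum] at h2
      simpa [r, φ] using h2
    have h3 : B u v = (Φ (T (e v))) u := rfl
    rw [h3, ← h']
    simp [WithLp.ofLp_sum]
  -- Parseval: column norms
  have hPars : ∀ v, ∑ u, (B u v)^2 = ∑ j, (r j v)^2 := by
    intro v
    have h1 : ∀ u, (B u v)^2 = ∑ j, ∑ j', (r j v * r j' v) * (φ j u * φ j' u) := by
      intro u
      rw [sq, hexp u v, Finset.sum_mul_sum]
      exact Finset.sum_congr rfl fun j _ => Finset.sum_congr rfl fun j' _ => by ring
    simp_rw [h1]
    rw [Finset.sum_comm]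
    refine Finset.sum_congr rfl fun j _ => ?_
    rw [Finset.sum_comm]
    have h2 : ∀ j', ∑ u, (r j v * r j' v) * (φ j u * φ j' u)
        = if j = j' then (r j v)^2 else 0 := by
      intro j'
      rw [← Finset.mul_sum, hφ j j']
      by_cases h : j = j' <;> simp [h, sq]
    refine (Finset.sum_congr rfl fun j' _ => h2 j').trans ?_
    simp
  -- rows of Walsh hit each basis vector with total weight m
  have hG : ∀ j, ∑ v, (∑ u, walshRow k u v * φ j u)^2 = m := by
    intro j
    have h1 : ∀ v, (∑ u, walshRow k u v * φ j u)^2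
        = ∑ u, ∑ u', (φ j u * φ j u') * (walshRow k u v * walshRow k u' v) := by
      intro v
      rw [sq, Finset.sum_mul_sum]
      exact Finset.sum_congr rfl fun a _ => Finset.sum_congr rfl fun a' _ => by ring
    simp_rw [h1]
    rw [Finset.sum_comm]
    have h2 : ∀ u, ∑ v, ∑ u', (φ j u * φ j u') * (walshRow k u v * walshRow k u' v)
        = m * (φ j u * φ j u) := by
      intro u
      rw [Finset.sum_comm]
      have h3 : ∀ u', ∑ v, (φ j u * φ j u') * (walshRow k u v * walshRow k u' v)
          = if u = u' then m * (φ j u * φ j u) else 0 := by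
        intro u'
        rw [← Finset.mul_sum, walsh_orth k u u']
        by_cases h : u = u'
        · subst h; rw [if_pos rfl, if_pos rfl, hm_def]; ring
        · rw [if_neg h, if_neg h, mul_zero]
      simp_rw [h3]
      rw [Fintype.sum_eq_single u fun x hx => if_neg (Ne.symm hx), if_pos rfl]
    simp_rw [h2]
    rw [← Finset.mul_sum, hφ j j]
    simp
  -- cardinality
  have hcard : ((Fintype.card ι : ℕ) : ℝ) = m := by
    have : Fintype.card ι = 2^k := by
      simp [ι, Fintype.card_fun]
    rw [this, hm_def]; push_cast; ring
  -- lower bound on the big sum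
  have hS1 : m * m ≤ ∑ u : ι, ∑ v, walshRow k u v * B u v := by
    have h1 : ∀ u : ι, m ≤ ∑ v, walshRow k u v * B u v := fun u => (hsum u) ▸ hTw u
    calc m * m = ∑ _u : ι, m := by
          rw [Finset.sum_const, Finset.card_univ, nsmul_eq_mul, hcard]
    _ ≤ _ := Finset.sum_le_sum fun u _ => h1 u
  -- flatten
  have hS2 : ∑ u : ι, ∑ v, walshRow k u v * B u v
      = ∑ p : ι × Fin (Module.finrank ℝ W),
          (r p.2 p.1) * (∑ u, walshRow k u p.1 * φ p.2 u) := by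
    rw [Finset.sum_comm, Fintype.sum_prod_type]
    refine Finset.sum_congr rfl fun v _ => ?_
    calc ∑ u, walshRow k u v * B u v
        = ∑ u, ∑ j, walshRow k u v * (r j v * φ j u) := by
          refine Finset.sum_congr rfl fun u _ => ?_
          rw [hexp u v, Finset.mul_sum]
    _ = ∑ j, ∑ u, walshRow k u v * (r j v * φ j u) := Finset.sum_comm
    _ = ∑ j, r j v * (∑ u, walshRow k u v * φ j u) := by
          refine Finset.sum_congr rfl fun j _ => ?_
          rw [Finset.mul_sum]
          exact Finset.sum_congr rfl fun u _ => by ring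
  have hCS := Finset.sum_mul_sq_le_sq_mul_sq Finset.univ
    (fun p : ι × Fin (Module.finrank ℝ W) => r p.2 p.1)
    (fun p : ι × Fin (Module.finrank ℝ W) => ∑ u, walshRow k u p.1 * φ p.2 u)
  have hFsum : ∑ p : ι × Fin (Module.finrank ℝ W), (r p.2 p.1)^2 ≤ m * m * D^2 := by
    rw [Fintype.sum_prod_type]
    calc ∑ v : ι, ∑ j, (r j v)^2 = ∑ v : ι, ∑ u : ι, (B u v)^2 :=
          Finset.sum_congr rfl fun v _ => (hPars v).symm
    _ ≤ ∑ _v : ι, ∑ _u : ι, D^2 := by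
          refine Finset.sum_le_sum fun v _ => Finset.sum_le_sum fun u _ => ?_
          have h := hB u v
          calc (B u v)^2 = |B u v|^2 := (sq_abs _).symm
          _ ≤ D^2 := by nlinarith [abs_nonneg (B u v)]
    _ = m * m * D^2 := by
          simp only [Finset.sum_const, Finset.card_univ, nsmul_eq_mul]
          rw [hcard]; ring
  have hGsum : ∑ p : ι × Fin (Module.finrank ℝ W),
      (∑ u, walshRow k u p.1 * φ p.2 u)^2 ≤ d * m := by
    rw [Fintype.sum_prod_type, Finset.sum_comm]
    calc ∑ j, ∑ v : ι, (∑ u, walshRow k u v * φ j u)^2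
        = ∑ _j : Fin (Module.finrank ℝ W), m :=
          Finset.sum_congr rfl fun j _ => hG j
    _ = (Module.finrank ℝ W : ℝ) * m := by
          rw [Finset.sum_const, Finset.card_univ, Fintype.card_fin, nsmul_eq_mul]
    _ ≤ d * m := by
          have h : ((Module.finrank ℝ W : ℕ) : ℝ) ≤ (d : ℝ) := by exact_mod_cast hdW
          nlinarith [hm.le]
  have hSnn : (0:ℝ) ≤ ∑ u : ι, ∑ v, walshRow k u v * B u v :=
    le_trans (by positivity) hS1
  have h4 : (m*m)^2 ≤ (m*m*D^2) * (d*m) := by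
    calc (m*m)^2 ≤ (∑ u : ι, ∑ v, walshRow k u v * B u v)^2 := by nlinarith [hS1, hSnn]
    _ ≤ _ * _ := hS2 ▸ hCS
    _ ≤ (m*m*D^2) * (d*m) := by
          refine mul_le_mul hFsum hGsum
            (Finset.sum_nonneg fun p _ => sq_nonneg _) (by positivity)
  have h5 : m ≤ d * D^2 := by
    have h6 : m^3 * m ≤ m^3 * (d * D^2) := by
      calc m^3 * m = (m*m)^2 := by ring
      _ ≤ (m*m*D^2) * (d*m) := h4
      _ = m^3 * (d * D^2) := by ring
    exact le_of_mul_le_mul_left h6 (by positivity)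
  have hd0 : (0:ℝ) < d := by
    rcases (Nat.cast_nonneg d : (0:ℝ) ≤ d).eq_or_lt with h | h
    · exfalso; nlinarith [hm]
    · exact h
  have h7 : m / d ≤ D^2 := (div_le_iff₀ hd0).mpr (by nlinarith)
  calc Real.sqrt ((2:ℝ)^k / d) = Real.sqrt (m/d) := by rw [hm_def]
  _ ≤ Real.sqrt (D^2) := Real.sqrt_le_sqrt h7
  _ = D := Real.sqrt_sq (by linarith)
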